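/- Let n ≥ 2 and t > 1. Define r : D_t^n × [0,1] → ℂ^{n+1} by r(x + iy, s) := (√(1 + s²‖y‖²)/‖x‖)·x + i·s·y (this is well defined since ‖x‖ ≥ 1 on Q^n). Then: (1) r(z,s) ∈ D_t^n for all z ∈ D_t^n and s ∈ [0,1]; (2) r(z,1) = z for all z ∈ D_t^n; (3) r(z,0) ∈ S^n for all z ∈ D_t^n; (4) r(z,s) = z for all z ∈ S^n and s ∈ [0,1]; (5) r is continuous. Hence r is a strong deformation retraction of D_t^n onto S^n. -/

import Mathlib

open Complex

/-- The componentwise real part of `z ∈ ℂ^{n+1}`, as a point of Euclidean `ℝ^{n+1}`. -/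
noncomputable def rePart (n : ℕ) (z : EuclideanSpace ℂ (Fin (n + 1))) :
    EuclideanSpace ℝ (Fin (n + 1)) := WithLp.toLp 2 (fun j => (z j).re)

/-- The componentwise imaginary part of `z ∈ ℂ^{n+1}`, as a point of Euclidean `ℝ^{n+1}`. -/
noncomputable def imPart (n : ℕ) (z : EuclideanSpace ℂ (Fin (n + 1))) :
    EuclideanSpace ℝ (Fin (n + 1)) := WithLp.toLp 2 (fun j => (z j).im)

/-- The retraction map `r(x + iy, s) = (√(1 + s²‖y‖²)/‖x‖)·x + i·s·y`. -/
noncomputable def retraction (n : ℕ) (z : EuclideanSpace ℂ (Fin (n + 1))) (s : ℝ) :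
    EuclideanSpace ℂ (Fin (n + 1)) :=
  WithLp.toLp 2 (fun j => ((Real.sqrt (1 + s ^ 2 * ‖imPart n z‖ ^ 2) / ‖rePart n z‖ : ℝ) : ℂ) * ((z j).re : ℂ) +
    Complex.I * (s : ℝ) * ((z j).im : ℂ))

/-- The domain `D_t^n = {z : z₁² + ⋯ + z_{n+1}² = 1, |z₁|² + ⋯ + |z_{n+1}|² < t}`. -/
def Dtn (n : ℕ) (t : ℝ) : Set (EuclideanSpace ℂ (Fin (n + 1))) :=
  {z | (∑ j, (z j) ^ 2) = 1 ∧ (∑ j, ‖z j‖ ^ 2) < t}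

/-- The real sphere `S^n = Q^n ∩ ℝ^{n+1}`. -/
def Sn (n : ℕ) : Set (EuclideanSpace ℂ (Fin (n + 1))) :=
  {z | (∑ j, (z j) ^ 2) = 1 ∧ ∀ j, (z j).im = 0}

lemma eucl_norm_sq (n : ℕ) (x : EuclideanSpace ℝ (Fin (n+1))) : ‖x‖^2 = ∑ j, (x j)^2 := by
  rw [EuclideanSpace.norm_eq, Real.sq_sqrt (by positivity)]
  simp [sq_abs]

lemma rePart_normsq (n : ℕ) (z : EuclideanSpace ℂ (Fin (n+1))) :
    ‖rePart n z‖^2 = ∑ j, (z j).re^2 := eucl_norm_sq n (rePart n z)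

lemma imPart_normsq (n : ℕ) (z : EuclideanSpace ℂ (Fin (n+1))) :
    ‖imPart n z‖^2 = ∑ j, (z j).im^2 := eucl_norm_sq n (imPart n z)

lemma quad_re (n : ℕ) (z : EuclideanSpace ℂ (Fin (n+1))) (h : (∑ j, (z j) ^ 2) = 1) :
    (∑ j, (z j).re^2) = 1 + ∑ j, (z j).im^2 := by
  have := congrArg Complex.re h
  rw [Complex.re_sum] at this
  simp only [sq, Complex.mul_re, Complex.one_re] at this
  have h2 : ∑ j, ((z j).re * (z j).re - (z j).im * (z j).im) = 1 := this
  rw [Finset.sum_sub_distrib] at h2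
  simp only [← sq] at h2
  linarith

lemma quad_im (n : ℕ) (z : EuclideanSpace ℂ (Fin (n+1))) (h : (∑ j, (z j) ^ 2) = 1) :
    (∑ j, (z j).re * (z j).im) = 0 := by
  have := congrArg Complex.im h
  rw [Complex.im_sum] at this
  simp only [sq, Complex.mul_im, Complex.one_im] at this
  have h2 : ∑ j, ((z j).re * (z j).im + (z j).im * (z j).re) = 0 := this
  have h3 : ∑ j, ((z j).re * (z j).im + (z j).im * (z j).re)
      = 2 * ∑ j, (z j).re * (z j).im := by
    rw [Finset.mul_sum]; exact Finset.sum_congr rfl fun j _ => by ring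
  rw [h3] at h2; linarith

lemma retr_re (n : ℕ) (z : EuclideanSpace ℂ (Fin (n+1))) (s : ℝ) (j : Fin (n+1)) :
    (retraction n z s j).re
      = (Real.sqrt (1 + s ^ 2 * ‖imPart n z‖ ^ 2) / ‖rePart n z‖) * (z j).re := by
  simp [retraction]

lemma retr_im (n : ℕ) (z : EuclideanSpace ℂ (Fin (n+1))) (s : ℝ) (j : Fin (n+1)) :
    (retraction n z s j).im = s * (z j).im := by
  simp [retraction]

-- basic norm facts on the quadric
lemma rePart_norm_sq_eq (n : ℕ) (z : EuclideanSpace ℂ (Fin (n+1)))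
    (h : (∑ j, (z j) ^ 2) = 1) : ‖rePart n z‖^2 = 1 + ‖imPart n z‖^2 := by
  rw [rePart_normsq, imPart_normsq, quad_re n z h]

lemma rePart_norm_pos (n : ℕ) (z : EuclideanSpace ℂ (Fin (n+1)))
    (h : (∑ j, (z j) ^ 2) = 1) : 0 < ‖rePart n z‖ := by
  have h1 := rePart_norm_sq_eq n z h
  have h2 : (0:ℝ) ≤ ‖imPart n z‖^2 := sq_nonneg _
  nlinarith [norm_nonneg (rePart n z)]

lemma c_sq (n : ℕ) (z : EuclideanSpace ℂ (Fin (n+1))) (s : ℝ)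
    (h : (∑ j, (z j) ^ 2) = 1) :
    (Real.sqrt (1 + s ^ 2 * ‖imPart n z‖ ^ 2) / ‖rePart n z‖)^2
      = (1 + s ^ 2 * ‖imPart n z‖ ^ 2) / (1 + ‖imPart n z‖^2) := by
  rw [div_pow, Real.sq_sqrt (by positivity), rePart_norm_sq_eq n z h]

lemma retr_quad (n : ℕ) (z : EuclideanSpace ℂ (Fin (n+1))) (s : ℝ)
    (h : (∑ j, (z j) ^ 2) = 1) :
    (∑ j, (retraction n z s j) ^ 2) = 1 := by
  set c := Real.sqrt (1 + s ^ 2 * ‖imPart n z‖ ^ 2) / ‖rePart n z‖ with hc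
  have hB : (0:ℝ) ≤ ‖imPart n z‖^2 := sq_nonneg _
  have hc2 := c_sq n z s h
  apply Complex.ext
  · rw [Complex.re_sum]
    have e : ∀ j, ((retraction n z s j)^2).re
        = c^2 * (z j).re^2 - s^2 * (z j).im^2 := by
      intro j
      rw [sq, Complex.mul_re, retr_re, retr_im, ← hc]; ring
    rw [Finset.sum_congr rfl fun j _ => e j, Finset.sum_sub_distrib,
      ← Finset.mul_sum, ← Finset.mul_sum, quad_re n z h, ← imPart_normsq, hc2]
    have hpos : (0:ℝ) < 1 + ‖imPart n z‖^2 := by linarith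
    rw [div_mul_cancel₀ _ (ne_of_gt hpos)]
    simp
  · rw [Complex.im_sum]
    have e : ∀ j, ((retraction n z s j)^2).im
        = 2 * c * s * ((z j).re * (z j).im) := by
      intro j
      rw [sq, Complex.mul_im, retr_re, retr_im, ← hc]; ring
    rw [Finset.sum_congr rfl fun j _ => e j, ← Finset.mul_sum, quad_im n z h]
    simp

lemma retr_absq (n : ℕ) (z : EuclideanSpace ℂ (Fin (n+1))) (s : ℝ)
    (h : (∑ j, (z j) ^ 2) = 1) :
    (∑ j, ‖retraction n z s j‖ ^ 2) = 1 + 2 * s^2 * ‖imPart n z‖^2 := by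
  set c := Real.sqrt (1 + s ^ 2 * ‖imPart n z‖ ^ 2) / ‖rePart n z‖ with hc
  have hB : (0:ℝ) ≤ ‖imPart n z‖^2 := sq_nonneg _
  have hc2 := c_sq n z s h
  have e : ∀ j, ‖retraction n z s j‖ ^ 2
      = c^2 * (z j).re^2 + s^2 * (z j).im^2 := by
    intro j
    rw [Complex.sq_norm, Complex.normSq_apply, retr_re, retr_im, ← hc]; ring
  rw [Finset.sum_congr rfl fun j _ => e j, Finset.sum_add_distrib,
    ← Finset.mul_sum, ← Finset.mul_sum, quad_re n z h, ← imPart_normsq, hc2]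
  have hpos : (0:ℝ) < 1 + ‖imPart n z‖^2 := by linarith
  rw [div_mul_cancel₀ _ (ne_of_gt hpos)]
  ring

lemma abs_sum_eq (n : ℕ) (z : EuclideanSpace ℂ (Fin (n+1)))
    (h : (∑ j, (z j) ^ 2) = 1) :
    (∑ j, ‖z j‖ ^ 2) = 1 + 2 * ‖imPart n z‖^2 := by
  have e : ∀ j, ‖z j‖ ^ 2 = (z j).re^2 + (z j).im^2 := by
    intro j; rw [Complex.sq_norm, Complex.normSq_apply]; ring
  rw [Finset.sum_congr rfl fun j _ => e j, Finset.sum_add_distrib,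
    quad_re n z h, ← imPart_normsq]
  ring

/-- `retraction` is a strong deformation retraction of `D_t^n` onto `S^n`:
(1) it maps `D_t^n × [0,1]` into `D_t^n`; (2) at `s = 1` it is the identity on `D_t^n`;
(3) at `s = 0` it lands in `S^n`; (4) it fixes `S^n` for all `s ∈ [0,1]`; (5) it is
continuous on `D_t^n × [0,1]`. -/
theorem stmt_3 (n : ℕ) (hn : 2 ≤ n) (t : ℝ) (ht : 1 < t) :
    (∀ z ∈ Dtn n t, ∀ s ∈ Set.Icc (0 : ℝ) 1, retraction n z s ∈ Dtn n t) ∧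
    (∀ z ∈ Dtn n t, retraction n z 1 = z) ∧
    (∀ z ∈ Dtn n t, retraction n z 0 ∈ Sn n) ∧
    (∀ z ∈ Sn n, ∀ s ∈ Set.Icc (0 : ℝ) 1, retraction n z s = z) ∧
    ContinuousOn (fun p : EuclideanSpace ℂ (Fin (n + 1)) × ℝ => retraction n p.1 p.2)
      (Dtn n t ×ˢ Set.Icc (0 : ℝ) 1) := by
  refine ⟨?_, ?_, ?_, ?_, ?_⟩
  · -- (1)
    rintro z ⟨h1, h2⟩ s ⟨hs0, hs1⟩
    refine ⟨retr_quad n z s h1, ?_⟩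
    rw [retr_absq n z s h1]
    rw [abs_sum_eq n z h1] at h2
    have hB : (0:ℝ) ≤ ‖imPart n z‖^2 := sq_nonneg _
    have hs2 : s^2 ≤ 1 := by nlinarith
    nlinarith [mul_le_mul_of_nonneg_right hs2 hB]
  · -- (2)
    rintro z ⟨h1, _⟩
    have hX := rePart_norm_pos n z h1
    have hXsq := rePart_norm_sq_eq n z h1
    have hc : Real.sqrt (1 + (1:ℝ) ^ 2 * ‖imPart n z‖ ^ 2) / ‖rePart n z‖ = 1 := by
      have : Real.sqrt (1 + (1:ℝ) ^ 2 * ‖imPart n z‖ ^ 2) = ‖rePart n z‖ := by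
        rw [one_pow, one_mul, ← hXsq, Real.sqrt_sq hX.le]
      rw [this, div_self hX.ne']
    ext j
    apply Complex.ext
    · rw [retr_re, hc, one_mul]
    · rw [retr_im, one_mul]
  · -- (3)
    rintro z ⟨h1, _⟩
    exact ⟨retr_quad n z 0 h1, fun j => by rw [retr_im]; ring⟩
  · -- (4)
    rintro z ⟨h1, him⟩ s _
    have hB : imPart n z = 0 := PiLp.ext fun j => him j
    have hXsq := rePart_norm_sq_eq n z h1
    rw [hB, norm_zero] at hXsq
    have hX1 : ‖rePart n z‖ = 1 := by
      have := rePart_norm_pos n z h1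
      nlinarith
    have hc : Real.sqrt (1 + s ^ 2 * ‖imPart n z‖ ^ 2) / ‖rePart n z‖ = 1 := by
      rw [hB, norm_zero, hX1]
      simp
    ext j
    apply Complex.ext
    · rw [retr_re, hc, one_mul]
    · rw [retr_im, him j, mul_zero]
  · -- (5)
    have hre : Continuous fun p : EuclideanSpace ℂ (Fin (n+1)) × ℝ => rePart n p.1 :=
      (PiLp.continuous_toLp _ _).comp (continuous_pi fun j => Complex.continuous_re.comp ((PiLp.continuous_apply _ _ j).comp continuous_fst))
    have him : Continuous fun p : EuclideanSpace ℂ (Fin (n+1)) × ℝ => imPart n p.1 :=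
      (PiLp.continuous_toLp _ _).comp (continuous_pi fun j => Complex.continuous_im.comp ((PiLp.continuous_apply _ _ j).comp continuous_fst))
    set S : Set (EuclideanSpace ℂ (Fin (n+1)) × ℝ) := {p | rePart n p.1 ≠ 0} with hS
    have hsub : Dtn n t ×ˢ Set.Icc (0:ℝ) 1 ⊆ S := by
      rintro ⟨z, s⟩ ⟨⟨h1, _⟩, _⟩
      have := rePart_norm_pos n z h1
      simpa [hS] using norm_pos_iff.mp this
    refine ContinuousOn.mono ?_ hsub
    have hg : ContinuousOn (fun p : EuclideanSpace ℂ (Fin (n+1)) × ℝ =>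
        Real.sqrt (1 + p.2 ^ 2 * ‖imPart n p.1‖ ^ 2) / ‖rePart n p.1‖) S := by
      apply ContinuousOn.div
      · apply Continuous.continuousOn
        exact Real.continuous_sqrt.comp
          (by continuity)
      · exact hre.norm.continuousOn
      · intro p hp
        exact norm_ne_zero_iff.mpr hp
    refine (PiLp.continuous_toLp 2 _).comp_continuousOn (f := fun p : EuclideanSpace ℂ (Fin (n+1)) × ℝ => fun j => ((Real.sqrt (1 + p.2 ^ 2 * ‖imPart n p.1‖ ^ 2) / ‖rePart n p.1‖ : ℝ) : ℂ) * ((p.1 j).re : ℂ) + Complex.I * (p.2 : ℝ) * ((p.1 j).im : ℂ)) ?_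
    apply continuousOn_pi.mpr
    intro j
    have hrej : Continuous fun p : EuclideanSpace ℂ (Fin (n+1)) × ℝ => ((p.1 j).re : ℂ) :=
      Complex.continuous_ofReal.comp
        (Complex.continuous_re.comp ((PiLp.continuous_apply _ _ j).comp continuous_fst))
    have himj : Continuous fun p : EuclideanSpace ℂ (Fin (n+1)) × ℝ => ((p.1 j).im : ℂ) :=
      Complex.continuous_ofReal.comp
        (Complex.continuous_im.comp ((PiLp.continuous_apply _ _ j).comp continuous_fst))
    have hs : Continuous fun p : EuclideanSpace ℂ (Fin (n+1)) × ℝ => ((p.2 : ℝ) : ℂ) :=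
      Complex.continuous_ofReal.comp continuous_snd
    exact ((Complex.continuous_ofReal.comp_continuousOn hg).mul hrej.continuousOn).add
      (((continuous_const.mul hs).mul himj).continuousOn)
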